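/- Let t and t' be distinct elements of ℤ_n with n a power of 2, let σ be uniform over odd residues mod n, b uniform over ℤ_n, and h_{σ,b}(i) = round(σ(i−b)·B/n mod n scaled). Then P[h_{σ,b}(t) = h_{σ,b}(t')] ≤ 4/B. -/

import Mathlib

open Finset

lemma count_small (k a j m : ℕ) (hm : m = a + k) (hj : j ≤ m) :
    ((Finset.range (2^k)).filter
      (fun r => Odd r ∧ (2^a * r < 2^j ∨ 2^m - 2^j < 2^a * r))).card ≤ 2 * (2^j / 2^a) := by
  classical
  obtain ⟨c', hc'⟩ : ∃ c', c' = 2^j / 2^a := ⟨_, rfl⟩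
  have hsub : (Finset.range (2^k)).filter
      (fun r => Odd r ∧ (2^a * r < 2^j ∨ 2^m - 2^j < 2^a * r)) ⊆
      (Finset.range c') ∪ (Finset.Ico (2^k - c') (2^k)) := by
    intro r hr
    simp only [mem_filter, mem_range] at hr
    obtain ⟨hrk, hodd, hcase⟩ := hr
    by_cases haj : a ≤ j
    · have h2 : (2:ℕ)^j = 2^a * c' := by
        rw [hc', Nat.pow_div haj (by norm_num)]
        rw [← pow_add]
        congr 1
        omega
      rcases hcase with h1 | h1
      · apply mem_union_left
        rw [mem_range]
        rw [h2] at h1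
        exact lt_of_mul_lt_mul_left h1 (Nat.zero_le _)
      · apply mem_union_right
        rw [mem_Ico]
        refine ⟨?_, hrk⟩
        have hck : c' ≤ 2^k := by
          rw [hc', Nat.pow_div haj (by norm_num)]
          exact Nat.pow_le_pow_right (by norm_num) (by omega)
        have h3 : (2:ℕ)^m - 2^j = 2^a * (2^k - c') := by
          rw [Nat.mul_sub, ← h2, hm, pow_add]
        rw [h3] at h1
        have := lt_of_mul_lt_mul_left h1 (Nat.zero_le (2^a))
        omega
    · -- a > j : contradiction
      exfalso
      push_neg at haj
      have h2aj : (2:ℕ)^j < 2^a := Nat.pow_lt_pow_right (by norm_num) haj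
      rcases hcase with h1 | h1
      · have : 2^a * r < 2^a := lt_trans h1 h2aj
        have hr0 : r = 0 := by
          by_contra hr0
          have : 2^a * 1 ≤ 2^a * r := Nat.mul_le_mul_left _ (by omega)
          omega
        rw [hr0] at hodd; simp at hodd
      · have hub : 2^a * r ≤ 2^a * (2^k - 1) := Nat.mul_le_mul_left _ (by omega)
        have : 2^a * (2^k - 1) = 2^m - 2^a := by
          rw [Nat.mul_sub, hm, pow_add]; ring_nf
        have hle : 2^m - 2^a ≤ 2^m - 2^j := Nat.sub_le_sub_left (le_of_lt h2aj) _
        omega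
  calc _ ≤ ((Finset.range c') ∪ (Finset.Ico (2^k - c') (2^k))).card :=
        Finset.card_le_card hsub
    _ ≤ (Finset.range c').card + (Finset.Ico (2^k - c') (2^k)).card :=
        Finset.card_union_le _ _
    _ ≤ c' + c' := by
        gcongr
        · simp
        · rw [Nat.card_Ico]
          generalize (2:ℕ)^k = K
          omega
    _ = 2 * c' := by ring
    _ ≤ _ := by rw [hc']

lemma count_bad (m a j u : ℕ) (hu : Odd u) (ham : a < m) (hj : j ≤ m) :
    ((Finset.range (2^m)).filter (fun s => Odd s ∧
      ((s * (2^a * u)) % 2^m < 2^j ∨ 2^m - 2^j < (s * (2^a * u)) % 2^m))).card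
      ≤ 2 * 2^j := by
  classical
  obtain ⟨k, hk, hmk⟩ : ∃ k, 1 ≤ k ∧ m = a + k := ⟨m - a, by omega, by omega⟩
  have hmod : ∀ s : ℕ, (s * (2^a * u)) % 2^m = 2^a * ((s*u) % 2^k) := by
    intro s
    rw [hmk, pow_add, show s * (2^a * u) = 2^a * (s * u) by ring, Nat.mul_mod_mul_left]
  have hcop : (2^k).gcd u = 1 := (Nat.Coprime.pow_left k (Nat.coprime_two_left.mpr hu))
  have key := Finset.card_le_mul_card_image_of_maps_to
    (f := fun s => (s * u) % 2^k)
    (s := (Finset.range (2^m)).filter (fun s => Odd s ∧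
      ((s * (2^a * u)) % 2^m < 2^j ∨ 2^m - 2^j < (s * (2^a * u)) % 2^m)))
    (t := (Finset.range (2^k)).filter
      (fun r => Odd r ∧ (2^a * r < 2^j ∨ 2^m - 2^j < 2^a * r)))
    (by
      intro s hs
      simp only [mem_filter, mem_range] at hs ⊢
      obtain ⟨hsm, hodd, hcase⟩ := hs
      refine ⟨Nat.mod_lt _ (by positivity), ?_, ?_⟩
      · rw [Nat.odd_iff, Nat.mod_mod_of_dvd _ (dvd_pow_self 2 (by omega)), ← Nat.odd_iff]
        exact hodd.mul hu
      · rw [hmod s] at hcase; exact hcase)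
    (2^a)
    (by
      intro r hr
      refine le_trans (Finset.card_le_card_of_injOn (t := Finset.range (2^a))
        (fun s => s / 2^k) ?_ ?_) (le_of_eq (Finset.card_range _))
      · intro s hs
        simp only [mem_coe, mem_filter, mem_range] at hs ⊢
        have hsm : s < 2^m := hs.1.1
        rw [Nat.div_lt_iff_lt_mul (by positivity)]
        rw [hmk, pow_add] at hsm
        linarith [hsm]
      · intro s hs s' hs' hdiv
        simp only [Finset.coe_filter, Set.mem_setOf_eq, mem_filter, mem_range] at hs hs'
        have h1 : (s * u) % 2^k = (s' * u) % 2^k := by rw [hs.2, hs'.2]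
        have hmeq : s % 2^k = s' % 2^k :=
          Nat.ModEq.cancel_right_of_coprime hcop h1
        have e1 := Nat.div_add_mod s (2^k)
        have e2 := Nat.div_add_mod s' (2^k)
        simp only at hdiv
        rw [← hdiv] at e2
        omega)
  calc _ ≤ 2^a * ((Finset.range (2^k)).filter
      (fun r => Odd r ∧ (2^a * r < 2^j ∨ 2^m - 2^j < 2^a * r))).card := key
    _ ≤ 2^a * (2 * (2^j / 2^a)) := by
        exact Nat.mul_le_mul_left _ (count_small k a j m hmk hj)
    _ = 2 * (2^j / 2^a * 2^a) := by ring
    _ ≤ 2 * 2^j := by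
        exact Nat.mul_le_mul_left _ (Nat.div_mul_le_self _ _)



lemma zmod_bad_card (m a j u : ℕ) (hu : Odd u) (ham : a < m) (hj : j ≤ m)
    (Δ : ZMod (2^m)) (hΔ : Δ.val = 2^a * u) :
    (Finset.univ.filter (fun σ : ZMod (2^m) => Odd σ.val ∧
      ((σ*Δ).val < 2^j ∨ 2^m - 2^j < (σ*Δ).val))).card ≤ 2*2^j := by
  classical
  have hNZ : NeZero (2^m) := ⟨by positivity⟩
  refine le_trans (Finset.card_le_card_of_injOn
    (t := (Finset.range (2^m)).filter (fun s => Odd s ∧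
      ((s * (2^a * u)) % 2^m < 2^j ∨ 2^m - 2^j < (s * (2^a * u)) % 2^m)))
    ZMod.val ?_ ?_) (count_bad m a j u hu ham hj)
  · intro σ hσ
    simp only [mem_coe, mem_filter, mem_univ, true_and, mem_range] at hσ ⊢
    refine ⟨ZMod.val_lt σ, hσ.1, ?_⟩
    have : (σ*Δ).val = σ.val * (2^a*u) % 2^m := by rw [ZMod.val_mul, hΔ]
    rw [← this]; exact hσ.2
  · intro σ _ σ' _ hv
    exact ZMod.val_injective _ hv

lemma odd_card_ge (m : ℕ) (hm : 1 ≤ m) :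
    2^(m-1) ≤ (Finset.univ.filter (fun σ : ZMod (2^m) => Odd σ.val)).card := by
  classical
  have hNZ : NeZero (2^m) := ⟨by positivity⟩
  have h2m : 2^m = 2 * 2^(m-1) := by
    rw [← pow_succ']; congr 1; omega
  refine le_trans (le_of_eq (Finset.card_range (2^(m-1))).symm)
    (Finset.card_le_card_of_injOn (fun k => ((2*k+1 : ℕ) : ZMod (2^m))) ?_ ?_)
  · intro k hk
    simp only [mem_coe, mem_range] at hk
    have hlt : 2*k+1 < 2^m := by omega
    simp only [mem_coe, mem_filter, mem_univ, true_and]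
    rw [ZMod.val_cast_of_lt hlt]
    exact ⟨k, by ring⟩
  · intro k hk k' hk' he
    simp only [coe_range, Set.mem_Iio] at hk hk'
    have hlt : 2*k+1 < 2^m := by omega
    have hlt' : 2*k'+1 < 2^m := by omega
    have := congrArg ZMod.val he
    rw [ZMod.val_cast_of_lt hlt, ZMod.val_cast_of_lt hlt'] at this
    omega

lemma abs_sub_lt_one_of_round_eq (p q : ℝ) (h : round p = round q) : |p - q| < 1 := by
  rw [round_eq, round_eq] at h
  have h1 := Int.floor_le (p + 1/2)
  have h2 := Int.lt_floor_add_one (p + 1/2)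
  have h3 := Int.floor_le (q + 1/2)
  have h4 := Int.lt_floor_add_one (q + 1/2)
  rw [h] at h1 h2
  rw [abs_sub_lt_iff]
  constructor <;> linarith


/-- Pairwise collision bound underlying Claim 3.1 of HIKP12: for distinct `t, t' ∈ ℤ_n`
(`n` a power of 2, `B ∣ n`), over uniform odd `σ` and uniform `b`,
`P[h_{σ,b}(t) = h_{σ,b}(t')] ≤ 4/B` where `h_{σ,b}(i) = round(σ(i−b) mod n · B / n)`. -/
theorem pairwise_collision_probability (n B : ℕ) [NeZero n] (hn : ∃ m : ℕ, n = 2 ^ m)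
    (hB : B ∣ n) (hBpos : 0 < B)
    (π : ZMod n → ZMod n → ZMod n → ℕ)
    (hπ : ∀ σ b i, π σ b i = (σ * (i - b)).val)
    (h : ZMod n → ZMod n → ZMod n → ℤ)
    (hh : ∀ σ b i, h σ b i = round ((π σ b i : ℝ) * B / n))
    (t t' : ZMod n) (htt' : t ≠ t') :
    ((Finset.univ.filter (fun p : ZMod n × ZMod n =>
        Odd p.1.val ∧ h p.1 p.2 t = h p.1 p.2 t')).card : ℝ) /
      (((Finset.univ.filter (fun σ : ZMod n => Odd σ.val)).card : ℝ) * n)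
    ≤ 4 / B := by
  classical
  obtain ⟨m, rfl⟩ := hn
  set Δ : ZMod (2^m) := t - t' with hΔdef
  have hΔ : Δ ≠ 0 := sub_ne_zero.mpr htt'
  have hD0 : 0 < Δ.val := ZMod.val_pos.mpr hΔ
  have hDn : Δ.val < 2^m := ZMod.val_lt Δ
  have hm1 : 1 ≤ m := by
    by_contra hc
    have : m = 0 := by omega
    subst this
    simp only [pow_zero] at hDn; omega
  -- factor Δ.val = 2^a * u
  obtain ⟨a, u, hu, hau⟩ : ∃ a u, Odd u ∧ Δ.val = 2^a * u := by
    refine ⟨Δ.val.factorization 2, Δ.val / 2^(Δ.val.factorization 2), ?_, ?_⟩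
    · have h2 := Nat.not_dvd_ordCompl Nat.prime_two hD0.ne'
      rw [Nat.odd_iff]
      omega
    · exact (Nat.ordProj_mul_ordCompl_eq_self Δ.val 2).symm
  have ham : a < m := by
    have h1 : 2^a ≤ Δ.val := Nat.le_of_dvd hD0 ⟨u, hau⟩
    have := lt_of_le_of_lt h1 hDn
    exact (Nat.pow_lt_pow_iff_right (by norm_num)).mp this
  -- B = 2^i
  obtain ⟨i, him, hBi⟩ := (Nat.dvd_prime_pow Nat.prime_two).mp hB
  set j := m - i with hjdef
  have hj : j ≤ m := by omega
  have hji : j + i = m := by omega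
  have hNpos : (0:ℝ) < ((2^m : ℕ) : ℝ) := by positivity
  have hBposR : (0:ℝ) < (B : ℝ) := by exact_mod_cast hBpos
  have hjB : ((2^j : ℕ) : ℝ) = ((2^m : ℕ) : ℝ) / B := by
    have : (2:ℕ)^j * B = 2^m := by rw [hBi, ← pow_add, hji]
    field_simp
    exact_mod_cast this
  -- collision implies bad sigma
  set badset := Finset.univ.filter (fun σ : ZMod (2^m) => Odd σ.val ∧
      ((σ*Δ).val < 2^j ∨ 2^m - 2^j < (σ*Δ).val)) with hbaddef
  have hsub : (Finset.univ.filter (fun p : ZMod (2^m) × ZMod (2^m) =>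
        Odd p.1.val ∧ h p.1 p.2 t = h p.1 p.2 t')) ⊆ badset ×ˢ Finset.univ := by
    rintro ⟨σ, b⟩ hp
    simp only [mem_filter, mem_univ, true_and] at hp
    obtain ⟨hodd, hcol⟩ := hp
    rw [Finset.mem_product, hbaddef, mem_filter]
    refine ⟨⟨mem_univ _, hodd, ?_⟩, mem_univ _⟩
    show (σ*Δ).val < 2^j ∨ 2^m - 2^j < (σ*Δ).val
    rw [hh, hh, hπ, hπ] at hcol
    set x := (σ * (t - b)).val with hxdef
    set y := (σ * (t' - b)).val with hydef
    have habs := abs_sub_lt_one_of_round_eq _ _ hcol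
    have habs2 : |(x:ℝ) - y| < ((2^j : ℕ) : ℝ) := by
      rw [hjB, lt_div_iff₀ hBposR]
      have hrw : (x:ℝ) * B / (2^m:ℕ) - (y:ℝ) * B / (2^m:ℕ)
          = ((x:ℝ) - y) * B / (2^m:ℕ) := by ring
      rw [hrw] at habs
      rw [abs_div, abs_mul] at habs
      rw [abs_of_pos hNpos, abs_of_pos hBposR, div_lt_iff₀ hNpos, one_mul] at habs
      exact habs
    have hxn : x < 2^m := ZMod.val_lt _
    have hyn : y < 2^m := ZMod.val_lt _
    have hcastx : ((x : ℕ) : ZMod (2^m)) = σ * (t - b) := by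
      rw [hxdef]; simp [ZMod.natCast_val, ZMod.cast_id]
    have hcasty : ((y : ℕ) : ZMod (2^m)) = σ * (t' - b) := by
      rw [hydef]; simp [ZMod.natCast_val, ZMod.cast_id]
    have hZ : σ * (t - b) - σ * (t' - b) = σ * Δ := by rw [hΔdef]; ring
    have hjm : (2:ℕ)^j ≤ 2^m := Nat.pow_le_pow_right (by norm_num) hj
    rcases le_or_gt y x with hxy | hxy
    · left
      have hd : ((x - y : ℕ) : ℝ) < ((2^j:ℕ):ℝ) := by
        rw [Nat.cast_sub hxy]
        calc (x:ℝ) - y ≤ |(x:ℝ) - y| := le_abs_self _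
          _ < _ := habs2
      have hdn : x - y < 2^j := by exact_mod_cast hd
      have hcast : ((x - y : ℕ) : ZMod (2^m)) = σ * Δ := by
        rw [Nat.cast_sub hxy, hcastx, hcasty, hZ]
      have hval : (σ * Δ).val = x - y := by
        rw [← hcast, ZMod.val_cast_of_lt (by omega)]
      omega
    · right
      have hd : ((y - x : ℕ) : ℝ) < ((2^j:ℕ):ℝ) := by
        rw [Nat.cast_sub hxy.le]
        calc (y:ℝ) - x ≤ |(x:ℝ) - y| := by rw [abs_sub_comm]; exact le_abs_self _
          _ < _ := habs2
      have hdn : y - x < 2^j := by exact_mod_cast hd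
      have hcast : ((2^m - (y - x) : ℕ) : ZMod (2^m)) = σ * Δ := by
        rw [Nat.cast_sub (by omega), ZMod.natCast_self, Nat.cast_sub hxy.le,
          hcastx, hcasty, ← hZ]
        ring
      have hval : (σ * Δ).val = 2^m - (y - x) := by
        rw [← hcast, ZMod.val_cast_of_lt (by omega)]
      omega
  -- cardinalities
  have hcardpairs : (Finset.univ.filter (fun p : ZMod (2^m) × ZMod (2^m) =>
        Odd p.1.val ∧ h p.1 p.2 t = h p.1 p.2 t')).card ≤ 2 * 2^j * 2^m := by
    calc _ ≤ (badset ×ˢ (Finset.univ : Finset (ZMod (2^m)))).card :=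
          Finset.card_le_card hsub
      _ = badset.card * 2^m := by
          rw [Finset.card_product, Finset.card_univ, ZMod.card]
      _ ≤ 2 * 2^j * 2^m := by
          exact Nat.mul_le_mul_right _ (zmod_bad_card m a j u hu ham hj Δ hau)
  have hoddcard := odd_card_ge m hm1
  -- final arithmetic
  set P := (Finset.univ.filter (fun p : ZMod (2^m) × ZMod (2^m) =>
        Odd p.1.val ∧ h p.1 p.2 t = h p.1 p.2 t')).card with hPdef
  set O := (Finset.univ.filter (fun σ : ZMod (2^m) => Odd σ.val)).card with hOdef
  have hOpos : 0 < O := lt_of_lt_of_le (by positivity) hoddcard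
  have hOR : ((2^m : ℕ):ℝ) / 2 ≤ (O:ℝ) := by
    have h2 : (2:ℕ) * 2^(m-1) = 2^m := by
      rw [← pow_succ']; congr 1; omega
    have : ((2^(m-1) : ℕ):ℝ) ≤ (O:ℝ) := by exact_mod_cast hoddcard
    rw [div_le_iff₀ (by norm_num)]
    calc ((2^m:ℕ):ℝ) = ((2^(m-1):ℕ):ℝ) * 2 := by
          rw [← h2]; push_cast; ring
      _ ≤ (O:ℝ) * 2 := by linarith
  have hPR : (P:ℝ) ≤ 2 * ((2^j:ℕ):ℝ) * ((2^m:ℕ):ℝ) := by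
    calc (P:ℝ) ≤ ((2 * 2^j * 2^m : ℕ) : ℝ) := by exact_mod_cast hcardpairs
      _ = 2 * ((2^j:ℕ):ℝ) * ((2^m:ℕ):ℝ) := by push_cast; ring
  have hORpos : (0:ℝ) < (O:ℝ) := by exact_mod_cast hOpos
  rw [div_le_div_iff₀ (by positivity) hBposR]
  have hjBm : ((2^j:ℕ):ℝ) * B = ((2^m:ℕ):ℝ) := by
    rw [hjB]; field_simp
  nlinarith [mul_pos hNpos hNpos, mul_le_mul_of_nonneg_right hPR hBposR.le,
    mul_le_mul_of_nonneg_right hOR hNpos.le, hjBm]
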